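/- For the Koszul differential ∂ on Λ•⊗T with T = Λ¹ ⊕ Λ², the first cohomology H¹(Λ•⊗T,∂) = ker(∂: Λ¹⊗T → Λ²⊗T)/im(∂: T → Λ¹⊗T) is isomorphic as a GL(n,ℝ)-module to the space of symmetric 2-tensors Sym²(ℝⁿ)*. -/
import Mathlib


/-- `H¹(Λ•⊗T, ∂) ≅ Sym²(ℝⁿ)*` for the Koszul differential on `Λ•⊗T`, `T = Λ¹⊕Λ²`.
An element of `Λ¹⊗T` is a pair `(Y,L)` with `Y_{ab}` and `L_{abc}` skew in `b,c`;
`∂(Y,L) = ((a,b) ↦ (L_{[ab]c}, 0))` and `∂(X,K) = (a ↦ (K_{a·},0))`.  The claim: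
the GL(n,ℝ)-equivariant map sending a `∂`-closed `(Y,L)` to the symmetric part of `Y`
vanishes exactly on the image of `∂ : T → Λ¹⊗T`, and hits every symmetric 2-tensor,
identifying `ker/im` with `Sym²(ℝⁿ)*`. -/
theorem stmt11 (n : ℕ) :
    (∀ (Y : Fin n → Fin n → ℝ) (L : Fin n → Fin n → Fin n → ℝ),
      (∀ a b c, L a b c = - L a c b) →
      (∀ a b c, (L a b c - L b a c) / 2 = 0) →
      ((∀ a b, (Y a b + Y b a) / 2 = 0) ↔
        ∃ (X : Fin n → ℝ) (K : Fin n → Fin n → ℝ),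
          (∀ a b, K a b = - K b a) ∧ (∀ a b, Y a b = K a b) ∧ L = 0)) ∧
    (∀ S : Fin n → Fin n → ℝ, (∀ a b, S a b = S b a) →
      ∃ (Y : Fin n → Fin n → ℝ) (L : Fin n → Fin n → Fin n → ℝ),
        (∀ a b c, L a b c = - L a c b) ∧
        (∀ a b c, (L a b c - L b a c) / 2 = 0) ∧
        (∀ a b, (Y a b + Y b a) / 2 = S a b)) := by
  constructor
  · intro Y L hskew hclosed
    have hsym : ∀ a b c, L a b c = L b a c := by
      intro a b c
      have := hclosed a b c
      linarith
    have hL0 : ∀ a b c, L a b c = 0 := by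
      intro a b c
      have h1 := hskew a b c
      have h2 := hsym a b c
      have h3 := hskew b a c
      have h4 := hsym a c b
      have h5 := hskew c a b
      have h6 := hsym c b a
      linarith
    constructor
    · intro hY
      refine ⟨0, Y, ?_, fun a b => rfl, ?_⟩
      · intro a b
        have := hY a b
        linarith
      · funext a b c; exact hL0 a b c
    · rintro ⟨X, K, hK, hYK, -⟩ a b
      have := hK a b
      rw [hYK a b, hYK b a]
      linarith
  · intro S hS
    exact ⟨fun a b => S a b, 0, fun a b c => by simp, fun a b c => by simp,
      fun a b => by have := hS a b; linarith⟩
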